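/- Let G be a commutative group, R a commutative ring, and ρ : G →* GL(n, R) a representation of G by invertible n × n matrices. For families X : G → Matrix n d R, define the Euclidean action (g ⊲ X) p = X (p * g), the morphological action (g ⊳ X) p = ρ(g) * X (p * g), and the decoder l(X) p = (ρ p)⁻¹ * X p. Then for all g ∈ G and all X, l(g ⊲ X) = g ⊳ l(X). -/
import Mathlib

/-- The Euclidean action on families of node-feature matrices indexed by group
elements: `(g ⊲ X) p = X (p * g)`. -/
def eucAct {G : Type*} [CommGroup G] {R n d : Type*}
    (g : G) (X : G → Matrix n d R) : G → Matrix n d R :=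
  fun p => X (p * g)

/-- The morphological action: `(g ⊳ X) p = ρ g * X (p * g)`. -/
def morphAct {G : Type*} [CommGroup G] {R : Type*} [CommRing R]
    {n d : Type*} [Fintype n] [DecidableEq n]
    (ρ : G →* Matrix.GeneralLinearGroup n R) (g : G) (X : G → Matrix n d R) :
    G → Matrix n d R :=
  fun p => (ρ g : Matrix n n R) * X (p * g)

/-- The output decoder: `l(X) p = (ρ p)⁻¹ * X p`. -/
def decoder {G : Type*} [CommGroup G] {R : Type*} [CommRing R]
    {n d : Type*} [Fintype n] [DecidableEq n]
    (ρ : G →* Matrix.GeneralLinearGroup n R) (X : G → Matrix n d R) :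
    G → Matrix n d R :=
  fun p => (((ρ p)⁻¹ : Matrix.GeneralLinearGroup n R) : Matrix n n R) * X p

/-- **Decoder intertwining (paper's Theorem 2, decoder step).**
For a commutative group `G`, the decoder turns the Euclidean action into the
morphological action: `l (g ⊲ X) = g ⊳ l X`. -/
theorem decoder_intertwines
    {G : Type*} [CommGroup G] {R : Type*} [CommRing R]
    {n d : Type*} [Fintype n] [DecidableEq n]
    (ρ : G →* Matrix.GeneralLinearGroup n R) (g : G) (X : G → Matrix n d R) :
    decoder ρ (eucAct g X) = morphAct ρ g (decoder ρ X) := by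
  funext p
  simp only [decoder, eucAct, morphAct, ← Matrix.mul_assoc]
  congr 1
  have : (ρ p)⁻¹ = ρ g * (ρ (p * g))⁻¹ := by
    rw [map_mul, mul_inv_rev]
    group
  rw [this]
  push_cast
  ring_nf
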